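/- Let P_A be the restriction of a reversible kernel to S∖A, with nonnegative top eigenvector ψ_0 (eigenvalue 1−λ_0). Then there exists b ≥ 0 such that, with B = {x : ψ_0(x) > b}, one has (1/|S|)·Q(B) ≤ λ_0 ≤ Q(B), where Q(B) = (∑_{(x,y): x∈B, y∉B} μ(x)p(x,y)) / (∑_{x∈B} μ(x)). -/

import Mathlib

open Finset

/-- In a finite set of reals with min < max, there is an element `c < max` such that
every element above `c` is at least `c + (max - min)/(card - 1)`. -/
lemma exists_gap (W : Finset ℝ) (hW : W.Nonempty) (hlt : W.min' hW < W.max' hW) :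
    ∃ c ∈ W, c < W.max' hW ∧ ∀ v ∈ W, c < v →
      c + (W.max' hW - W.min' hW) / ((W.card : ℝ) - 1) ≤ v := by
  classical
  set l := W.sort (· ≤ ·) with hl
  have hlen : l.length = W.card := W.length_sort _
  have hcard2 : 2 ≤ W.card :=
    Finset.one_lt_card.mpr
      ⟨W.min' hW, W.min'_mem hW, W.max' hW, W.max'_mem hW, ne_of_lt hlt⟩
  set n := W.card - 1 with hn
  have hn1 : 1 ≤ n := by omega
  have hlenn : l.length = n + 1 := by omega
  set f : ℕ → ℝ := fun i => l.getD i 0 with hf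
  have hget : ∀ i (h : i < l.length), f i = l.get ⟨i, h⟩ := fun i h =>
    List.getD_eq_getElem _ _ h
  have hmemW : ∀ i, i < l.length → f i ∈ W := by
    intro i h
    rw [hget i h]
    exact (Finset.mem_sort (· ≤ ·)).mp (l.get_mem _)
  have hmono : ∀ i j (hij : i ≤ j) (hj : j < l.length), f i ≤ f j := by
    intro i j hij hj
    rw [hget i (lt_of_le_of_lt hij hj), hget j hj]
    exact (W.pairwise_sort (· ≤ ·)).rel_get_of_le hij
  have h0 : f 0 = W.min' hW := by
    rw [hget 0 (by omega)]
    exact Finset.sorted_zero_eq_min'_aux W (by rw [W.length_sort (· ≤ ·)]; omega) hW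
  have hlast : f n = W.max' hW := by
    rw [hget n (by omega)]
    have := Finset.sorted_last_eq_max'_aux W
      (h := by rw [W.length_sort (· ≤ ·)]; omega) hW
    simpa [hlen, hn, List.get_eq_getElem] using this
  have hnR : ((W.card : ℝ) - 1) = (n : ℝ) := by
    rw [hn]; push_cast [Nat.cast_sub (by omega : 1 ≤ W.card)]; ring
  set g : ℝ := (W.max' hW - W.min' hW) / ((W.card : ℝ) - 1) with hg
  have hgpos : 0 < g := by
    apply div_pos (by linarith) (by rw [hnR]; exact_mod_cast hn1)
  -- find a gap of size ≥ g
  have key : ∃ i < n, g ≤ f (i + 1) - f i := by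
    by_contra hcon
    push_neg at hcon
    have hsum : ∑ i ∈ Finset.range n, (f (i + 1) - f i) = f n - f 0 :=
      Finset.sum_range_sub f n
    have hlt2 : ∑ i ∈ Finset.range n, (f (i + 1) - f i) <
        ∑ _i ∈ Finset.range n, g := by
      apply Finset.sum_lt_sum_of_nonempty (by simp; omega)
      intro i hi
      exact hcon i (Finset.mem_range.mp hi)
    rw [hsum, h0, hlast, Finset.sum_const, Finset.card_range, nsmul_eq_mul] at hlt2
    rw [hg, hnR] at hlt2
    rw [mul_div_cancel₀ _ (by exact_mod_cast (by omega : n ≠ 0) : (n : ℝ) ≠ 0)] at hlt2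
    exact lt_irrefl _ hlt2
  obtain ⟨i, hi, hgap⟩ := key
  refine ⟨f i, hmemW i (by omega), ?_, ?_⟩
  · have h1 : f (i + 1) ≤ f n := hmono _ _ (by omega) (by omega)
    rw [hlast] at h1; linarith
  · intro v hv hcv
    obtain ⟨j, hj⟩ := List.mem_iff_get.mp ((Finset.mem_sort (· ≤ ·)).mpr hv)
    have hij : i + 1 ≤ (j : ℕ) := by
      by_contra hcon
      push_neg at hcon
      have : v ≤ f i := by
        rw [← hj, ← hget j j.isLt]
        exact hmono _ _ (by omega) (by omega)
      linarith
    have : f (i + 1) ≤ v := by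
      rw [← hj, ← hget j j.isLt]
      exact hmono _ _ hij j.isLt
    linarith

/-- Given the nonnegative top eigenvector `ψ₀` (eigenvalue `1−λ₀`) of the restricted
kernel `P_A`, there is a threshold `b ≥ 0` such that the super-level set
`B = {x : ψ₀(x) > b}` satisfies `(1/|S|)·Q(B) ≤ λ₀ ≤ Q(B)`, where
`Q(B) = (∑_{x∈B, y∉B} μ(x)p(x,y)) / μ(B)`. -/
theorem eigenvector_level_set_bounds {St : Type*} [Fintype St] [DecidableEq St]
    (p : St → St → ℝ) (μ : St → ℝ)
    (hμ : ∀ x, 0 < μ x)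
    (hp : ∀ x y, 0 ≤ p x y) (hrow : ∀ x, ∑ y, p x y = 1)
    (hrev : ∀ x y, μ x * p x y = μ y * p y x)
    (A : Finset St) (hA : A.Nonempty)
    (PA : Matrix St St ℝ)
    (hPA : ∀ x y, PA x y = if x ∈ A ∨ y ∈ A then 0 else p x y)
    (lam0 : ℝ) (ψ0 : St → ℝ)
    (hψ0_ne : ψ0 ≠ 0) (hψ0_nonneg : ∀ x, 0 ≤ ψ0 x) (hψ0_A : ∀ x ∈ A, ψ0 x = 0)
    (heig : PA.mulVec ψ0 = (1 - lam0) • ψ0)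
    (hvar : ∀ φ : St → ℝ, (∀ x ∈ A, φ x = 0) →
      lam0 * ∑ x, μ x * φ x ^ 2 ≤
        (1 / 2) * ∑ x, ∑ y, μ x * p x y * (φ x - φ y) ^ 2) :
    ∃ b : ℝ, 0 ≤ b ∧
      (1 / (Fintype.card St : ℝ)) *
        ((∑ x ∈ Finset.univ.filter fun x => b < ψ0 x,
            ∑ y ∈ (Finset.univ.filter fun x => b < ψ0 x)ᶜ, μ x * p x y) /
          ∑ x ∈ Finset.univ.filter fun x => b < ψ0 x, μ x) ≤ lam0 ∧
      lam0 ≤ (∑ x ∈ Finset.univ.filter fun x => b < ψ0 x,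
            ∑ y ∈ (Finset.univ.filter fun x => b < ψ0 x)ᶜ, μ x * p x y) /
          ∑ x ∈ Finset.univ.filter fun x => b < ψ0 x, μ x := by
  obtain ⟨a0, ha0⟩ := hA
  set W : Finset ℝ := Finset.univ.image ψ0 with hWdef
  have hWne : W.Nonempty := ⟨ψ0 a0, Finset.mem_image.mpr ⟨a0, Finset.mem_univ _, rfl⟩⟩
  have h0W : (0 : ℝ) ∈ W := Finset.mem_image.mpr ⟨a0, Finset.mem_univ _, hψ0_A a0 ha0⟩
  have hmemW : ∀ x, ψ0 x ∈ W := fun x => Finset.mem_image.mpr ⟨x, Finset.mem_univ _, rfl⟩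
  have hmin : W.min' hWne = 0 := le_antisymm (Finset.min'_le _ _ h0W)
    (Finset.le_min' _ _ _ (by
      rintro y hy
      obtain ⟨x, -, rfl⟩ := Finset.mem_image.mp hy
      exact hψ0_nonneg x))
  set M := W.max' hWne with hMdef
  obtain ⟨xM, -, hxM⟩ := Finset.mem_image.mp (W.max'_mem hWne)
  have hle_max : ∀ x, ψ0 x ≤ M := fun x => Finset.le_max' _ _ (hmemW x)
  have hMpos : 0 < M := by
    obtain ⟨x, hx⟩ := Function.ne_iff.mp hψ0_ne
    have hx' : 0 < ψ0 x := lt_of_le_of_ne (hψ0_nonneg x) (Ne.symm (by simpa using hx))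
    exact lt_of_lt_of_le hx' (hle_max x)
  obtain ⟨c, hcW, hcM, hgap⟩ := exists_gap W hWne (by rw [hmin]; exact hMpos)
  rw [hmin, sub_zero] at hgap
  have hc0 : 0 ≤ c := by
    obtain ⟨x, -, rfl⟩ := Finset.mem_image.mp hcW
    exact hψ0_nonneg x
  have hcard2 : 2 ≤ W.card :=
    Finset.one_lt_card.mpr ⟨c, hcW, M, W.max'_mem hWne, ne_of_lt hcM⟩
  set g : ℝ := M / ((W.card : ℝ) - 1) with hgdef
  have hcardR : (1 : ℝ) ≤ (W.card : ℝ) - 1 := by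
    have : (2 : ℝ) ≤ (W.card : ℝ) := by exact_mod_cast hcard2
    linarith
  have hgpos : 0 < g := div_pos hMpos (by linarith)
  have hgM : g * ((W.card : ℝ) - 1) = M := div_mul_cancel₀ _ (by linarith)
  -- the level set
  set B : Finset St := Finset.univ.filter fun x => c < ψ0 x with hBdef
  have hmemB : ∀ x, x ∈ B ↔ c < ψ0 x := by intro x; simp [hBdef]
  have hmemBc : ∀ x, x ∈ Bᶜ ↔ ¬ c < ψ0 x := by intro x; simp [hBdef]
  have hBne : B.Nonempty := ⟨xM, (hmemB xM).mpr (hxM ▸ hcM)⟩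
  set vol : ℝ := ∑ x ∈ B, μ x with hvoldef
  set flow : ℝ := ∑ x ∈ B, ∑ y ∈ Bᶜ, μ x * p x y with hflowdef
  have hvol : 0 < vol := Finset.sum_pos (fun x _ => hμ x) hBne
  have hBA : ∀ x ∈ B, x ∉ A := by
    intro x hx hxA
    have h1 := (hmemB x).mp hx
    rw [hψ0_A x hxA] at h1
    linarith
  have hψB : ∀ x ∈ B, c + g ≤ ψ0 x := fun x hx =>
    hgap _ (hmemW x) ((hmemB x).mp hx)
  have hψBc : ∀ y ∈ Bᶜ, ψ0 y ≤ c := fun y hy => not_lt.mp ((hmemBc y).mp hy)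
  -- local eigen-equation
  have hloc : ∀ x, x ∉ A → ∑ y, p x y * (ψ0 x - ψ0 y) = lam0 * ψ0 x := by
    intro x hx
    have h1 : (PA.mulVec ψ0) x = (1 - lam0) * ψ0 x := by
      rw [heig]; simp
    have h2 : (PA.mulVec ψ0) x = ∑ y, p x y * ψ0 y := by
      simp only [Matrix.mulVec, dotProduct]
      apply Finset.sum_congr rfl
      intro y _
      by_cases hy : y ∈ A
      · simp [hPA, hy, hψ0_A y hy]
      · simp [hPA, hy, hx]
    have h3 : ∑ y, p x y * ψ0 y = (1 - lam0) * ψ0 x := by rw [← h2, h1]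
    have h4 : ∑ y, p x y * (ψ0 x - ψ0 y)
        = (∑ y, p x y) * ψ0 x - ∑ y, p x y * ψ0 y := by
      rw [Finset.sum_mul, ← Finset.sum_sub_distrib]
      apply Finset.sum_congr rfl
      intro y _; ring
    rw [h4, hrow, h3]; ring
  -- summed identity over B
  have hI : ∑ x ∈ B, ∑ y ∈ Bᶜ, μ x * p x y * (ψ0 x - ψ0 y)
      = lam0 * ∑ x ∈ B, μ x * ψ0 x := by
    have h1 : ∑ x ∈ B, μ x * ∑ y, p x y * (ψ0 x - ψ0 y)
        = lam0 * ∑ x ∈ B, μ x * ψ0 x := by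
      rw [Finset.mul_sum]
      apply Finset.sum_congr rfl
      intro x hx
      rw [hloc x (hBA x hx)]; ring
    have h2 : ∑ x ∈ B, μ x * ∑ y, p x y * (ψ0 x - ψ0 y)
        = ∑ x ∈ B, ∑ y ∈ B, μ x * p x y * (ψ0 x - ψ0 y)
          + ∑ x ∈ B, ∑ y ∈ Bᶜ, μ x * p x y * (ψ0 x - ψ0 y) := by
      rw [← Finset.sum_add_distrib]
      apply Finset.sum_congr rfl
      intro x _
      rw [Finset.sum_add_sum_compl B (fun y => μ x * p x y * (ψ0 x - ψ0 y)),
        Finset.mul_sum]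
      apply Finset.sum_congr rfl
      intro y _; ring
    have h3 : ∑ x ∈ B, ∑ y ∈ B, μ x * p x y * (ψ0 x - ψ0 y) = 0 := by
      have e1 : ∑ x ∈ B, ∑ y ∈ B, μ x * p x y * ψ0 x
          = ∑ x ∈ B, ∑ y ∈ B, μ x * p x y * ψ0 y := by
        rw [Finset.sum_comm]
        apply Finset.sum_congr rfl
        intro y _
        apply Finset.sum_congr rfl
        intro x _
        rw [hrev]
      have e2 : ∀ x ∈ B, ∀ y ∈ B, μ x * p x y * (ψ0 x - ψ0 y)
          = μ x * p x y * ψ0 x - μ x * p x y * ψ0 y := by intro x _ y _; ring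
      calc ∑ x ∈ B, ∑ y ∈ B, μ x * p x y * (ψ0 x - ψ0 y)
          = ∑ x ∈ B, ∑ y ∈ B, (μ x * p x y * ψ0 x - μ x * p x y * ψ0 y) := by
            apply Finset.sum_congr rfl; intro x hx
            apply Finset.sum_congr rfl; intro y hy
            exact e2 x hx y hy
        _ = ∑ x ∈ B, ∑ y ∈ B, μ x * p x y * ψ0 x
              - ∑ x ∈ B, ∑ y ∈ B, μ x * p x y * ψ0 y := by
            rw [← Finset.sum_sub_distrib]
            apply Finset.sum_congr rfl
            intro x _
            rw [← Finset.sum_sub_distrib]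
        _ = 0 := by rw [e1]; ring
    linarith [h1, h2, h3]
  -- lower bound chain
  have hstepa : g * flow ≤ ∑ x ∈ B, ∑ y ∈ Bᶜ, μ x * p x y * (ψ0 x - ψ0 y) := by
    rw [hflowdef, Finset.mul_sum]
    apply Finset.sum_le_sum
    intro x hx
    rw [Finset.mul_sum]
    apply Finset.sum_le_sum
    intro y hy
    have h1 : g ≤ ψ0 x - ψ0 y := by
      have := hψB x hx
      have := hψBc y hy
      linarith
    have h2 : 0 ≤ μ x * p x y := mul_nonneg (le_of_lt (hμ x)) (hp x y)
    calc g * (μ x * p x y) = (μ x * p x y) * g := by ring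
      _ ≤ (μ x * p x y) * (ψ0 x - ψ0 y) := mul_le_mul_of_nonneg_left h1 h2
      _ = μ x * p x y * (ψ0 x - ψ0 y) := by ring
  have hflow0 : 0 ≤ flow := by
    apply Finset.sum_nonneg
    intro x _
    apply Finset.sum_nonneg
    intro y _
    exact mul_nonneg (le_of_lt (hμ x)) (hp x y)
  have hvolψ : 0 < ∑ x ∈ B, μ x * ψ0 x := by
    apply Finset.sum_pos
    · intro x hx
      have := (hmemB x).mp hx
      exact mul_pos (hμ x) (by linarith [hc0])
    · exact hBne
  have hlam0 : 0 ≤ lam0 := by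
    have h1 : 0 ≤ lam0 * ∑ x ∈ B, μ x * ψ0 x := by
      rw [← hI]
      exact le_trans (mul_nonneg (le_of_lt hgpos) hflow0) hstepa
    by_contra hneg
    push_neg at hneg
    nlinarith [h1, hvolψ]
  have hsumψ : ∑ x ∈ B, μ x * ψ0 x ≤ M * vol := by
    rw [hvoldef, Finset.mul_sum]
    apply Finset.sum_le_sum
    intro x _
    calc μ x * ψ0 x ≤ μ x * M := mul_le_mul_of_nonneg_left (hle_max x) (le_of_lt (hμ x))
      _ = M * μ x := by ring
  have hkey : g * flow ≤ lam0 * (M * vol) :=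
    le_trans hstepa (hI ▸ mul_le_mul_of_nonneg_left hsumψ hlam0)
  have hflowle : flow ≤ lam0 * ((W.card : ℝ) - 1) * vol := by
    have h1 : g * flow ≤ g * (lam0 * ((W.card : ℝ) - 1) * vol) := by
      calc g * flow ≤ lam0 * (M * vol) := hkey
        _ = g * (lam0 * ((W.card : ℝ) - 1) * vol) := by rw [← hgM]; ring
    exact le_of_mul_le_mul_left h1 hgpos
  have hKpos : 0 < (Fintype.card St : ℝ) := by
    have : 0 < Fintype.card St := Fintype.card_pos_iff.mpr ⟨a0⟩
    exact_mod_cast this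
  have hWcard_le : (W.card : ℝ) - 1 ≤ (Fintype.card St : ℝ) := by
    have h1 : W.card ≤ Fintype.card St := by
      calc W.card ≤ Finset.univ.card := Finset.card_image_le.trans (le_of_eq (Finset.card_univ))
        _ = Fintype.card St := Finset.card_univ
    have : (W.card : ℝ) ≤ (Fintype.card St : ℝ) := by exact_mod_cast h1
    linarith
  refine ⟨c, hc0, ?_, ?_⟩
  · -- lower bound
    rw [← hBdef, ← hflowdef, ← hvoldef]
    have h1 : flow / vol ≤ lam0 * (Fintype.card St : ℝ) := by
      rw [div_le_iff₀ hvol]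
      calc flow ≤ lam0 * ((W.card : ℝ) - 1) * vol := hflowle
        _ ≤ lam0 * (Fintype.card St : ℝ) * vol := by
            apply mul_le_mul_of_nonneg_right _ (le_of_lt hvol)
            exact mul_le_mul_of_nonneg_left hWcard_le hlam0
    calc (1 / (Fintype.card St : ℝ)) * (flow / vol)
        ≤ (1 / (Fintype.card St : ℝ)) * (lam0 * (Fintype.card St : ℝ)) :=
          mul_le_mul_of_nonneg_left h1 (by positivity)
      _ = lam0 := by field_simp
  · -- upper bound via variational principle with indicator of B
    rw [← hBdef, ← hflowdef, ← hvoldef]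
    set φ : St → ℝ := fun x => if x ∈ B then 1 else 0 with hφdef
    have hφA : ∀ x ∈ A, φ x = 0 := by
      intro x hx
      have : x ∉ B := fun hB => hBA x hB hx
      simp [hφdef, this]
    have hvar' := hvar φ hφA
    have hL : ∑ x, μ x * φ x ^ 2 = vol := by
      rw [hvoldef]
      rw [show (∑ x, μ x * φ x ^ 2) = ∑ x, if x ∈ B then μ x else 0 from
        Finset.sum_congr rfl fun x _ => by by_cases hx : x ∈ B <;> simp [hφdef, hx]]
      rw [Finset.sum_ite_mem, Finset.univ_inter]
    have hflow2 : ∑ x ∈ Bᶜ, ∑ y ∈ B, μ x * p x y = flow := by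
      rw [hflowdef, Finset.sum_comm]
      apply Finset.sum_congr rfl
      intro y _
      apply Finset.sum_congr rfl
      intro x _
      rw [hrev]
    have hR : (1 / 2 : ℝ) * ∑ x, ∑ y, μ x * p x y * (φ x - φ y) ^ 2 = flow := by
      have hterm : ∀ x y, μ x * p x y * (φ x - φ y) ^ 2
          = (if x ∈ B ∧ y ∈ Bᶜ then μ x * p x y else 0)
            + (if x ∈ Bᶜ ∧ y ∈ B then μ x * p x y else 0) := by
        intro x y
        by_cases hx : x ∈ B <;> by_cases hy : y ∈ B <;>
          simp [hφdef, hx, hy, Finset.mem_compl]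
      have hsum : ∑ x, ∑ y, μ x * p x y * (φ x - φ y) ^ 2
          = (∑ x ∈ B, ∑ y ∈ Bᶜ, μ x * p x y) + ∑ x ∈ Bᶜ, ∑ y ∈ B, μ x * p x y := by
        have e1 : ∀ (s t : Finset St),
            ∑ x, ∑ y, (if x ∈ s ∧ y ∈ t then μ x * p x y else 0)
              = ∑ x ∈ s, ∑ y ∈ t, μ x * p x y := by
          intro s t
          have e2 : ∀ x, (∑ y, if x ∈ s ∧ y ∈ t then μ x * p x y else 0)
              = if x ∈ s then ∑ y ∈ t, μ x * p x y else 0 := by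
            intro x
            by_cases hx : x ∈ s
            · simp only [hx, true_and, if_true]
              rw [Finset.sum_ite_mem, Finset.univ_inter]
            · simp [hx]
          rw [Finset.sum_congr rfl fun x _ => e2 x, Finset.sum_ite_mem,
            Finset.univ_inter]
        calc ∑ x, ∑ y, μ x * p x y * (φ x - φ y) ^ 2
            = ∑ x, ∑ y, ((if x ∈ B ∧ y ∈ Bᶜ then μ x * p x y else 0)
              + (if x ∈ Bᶜ ∧ y ∈ B then μ x * p x y else 0)) := by
              apply Finset.sum_congr rfl; intro x _
              apply Finset.sum_congr rfl; intro y _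
              exact hterm x y
          _ = (∑ x, ∑ y, if x ∈ B ∧ y ∈ Bᶜ then μ x * p x y else 0)
              + ∑ x, ∑ y, if x ∈ Bᶜ ∧ y ∈ B then μ x * p x y else 0 := by
              rw [← Finset.sum_add_distrib]
              apply Finset.sum_congr rfl; intro x _
              rw [← Finset.sum_add_distrib]
          _ = (∑ x ∈ B, ∑ y ∈ Bᶜ, μ x * p x y) + ∑ x ∈ Bᶜ, ∑ y ∈ B, μ x * p x y := by
              rw [e1 B Bᶜ, e1 Bᶜ B]
      rw [hsum, hflow2, ← hflowdef]
      ring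
    rw [hL, hR] at hvar'
    rw [le_div_iff₀ hvol]
    exact hvar'
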